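/- Let L, τ, a, κ₁, c₀ > 0, let κ₂ ∈ ℝ \ {0} with |κ₂| < κ₁, and let 0 < α < β < γ < L. Suppose u, y : [0,L] × [0,∞) → ℂ are twice continuously differentiable, η : [0,L] × [0,1] × [0,∞) → ℂ is continuously differentiable and has continuous mixed partial derivatives η_{xρ} and η_{xt}, and suppose: (i) there is a function S(x,t), continuously differentiable in x on [0,L], such that S(x,t) = a u_x(x,t) + κ₁ u_{tx}(x,t) + κ₂ η_x(x,1,t) for x ∈ (0,β), S(x,t) = a u_x(x,t) for x ∈ (β,L), and u_{tt} − S_x + c(x) y_t = 0 on (0,L) × (0,∞); (ii) y_{tt} − y_{xx} − c(x) u_t = 0 on (0,L) × (0,∞); (iii) τ η_t(x,ρ,t) + η_ρ(x,ρ,t) = 0 on (0,L) × (0,1) × (0,∞); (iv) u(0,t) = u(L,t) = y(0,t) = y(L,t) = 0 and η(0,ρ,t) = 0 for all t > 0, ρ ∈ (0,1); (v) η(x,0,t) = u_t(x,t). Then the energy E(t) = (1/2)∫₀^L (|u_t|² + a|u_x|²) dx + (1/2)∫₀^L (|y_t|² + |y_x|²) dx + (τ|κ₂|/2)∫₀^β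 ∫₀¹ |η_x(x,ρ,t)|² dρ dx is differentiable in t and satisfies E′(t) ≤ −(κ₁ − |κ₂|) ∫₀^β |η_x(x,0,t)|² dx for every t > 0. -/

import Mathlib

open MeasureTheory Complex

open MeasureTheory Complex Metric intervalIntegral

section Helpers

variable {E : Type*} [NormedAddCommGroup E] [NormedSpace ℝ E]

lemma myre {f : ℝ → ℂ} {f' : ℂ} {t : ℝ} (h : HasDerivAt f f' t) :
    HasDerivAt (fun s => (f s).re) f'.re t :=
  (Complex.reCLM.hasFDerivAt.comp_hasDerivAt t h)

lemma myconj {f : ℝ → ℂ} {f' : ℂ} {t : ℝ} (h : HasDerivAt f f' t) :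
    HasDerivAt (fun s => (starRingEnd ℂ) (f s)) ((starRingEnd ℂ) f') t :=
  h.star

lemma mynormsq {f : ℝ → ℂ} {f' : ℂ} {t : ℝ} (h : HasDerivAt f f' t) :
    HasDerivAt (fun s => ‖f s‖ ^ 2) (2 * (f' * (starRingEnd ℂ) (f t)).re) t := by
  have h1 : HasDerivAt (fun s => (f s * (starRingEnd ℂ) (f s)).re)
      (f' * (starRingEnd ℂ) (f t) + f t * (starRingEnd ℂ) f').re t := myre (h.mul h.star)
  have e : ∀ z : ℂ, (z * (starRingEnd ℂ) z).re = ‖z‖ ^ 2 := by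
    intro z; rw [Complex.mul_conj, Complex.ofReal_re, ← Complex.sq_norm]
  have e2 : (f' * (starRingEnd ℂ) (f t) + f t * (starRingEnd ℂ) f').re
      = 2 * (f' * (starRingEnd ℂ) (f t)).re := by
    simp [Complex.add_re, Complex.mul_re, Complex.conj_re, Complex.conj_im]; ring
  rw [← e2]
  exact h1.congr_of_eventuallyEq (by filter_upwards with s using (e (f s)).symm)

lemma myleibniz [CompleteSpace E]
    {F F' : ℝ → ℝ → E} {A B t₀ ε M : ℝ} (hε : 0 < ε)
    (hd : ∀ x ∈ Set.uIcc A B, ∀ s ∈ ball t₀ ε, HasDerivAt (F x) (F' x s) s)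
    (hFc : ∀ s ∈ ball t₀ ε, ContinuousOn (fun x => F x s) (Set.uIcc A B))
    (hM : ∀ x ∈ Set.uIcc A B, ∀ s ∈ ball t₀ ε, ‖F' x s‖ ≤ M)
    (hF'c : ContinuousOn (fun x => F' x t₀) (Set.uIcc A B)) :
    HasDerivAt (fun s => ∫ x in A..B, F x s) (∫ x in A..B, F' x t₀) t₀ := by
  have h := hasDerivAt_integral_of_dominated_loc_of_deriv_le (μ := volume)
    (F := fun s x => F x s) (F' := fun s x => F' x s) (x₀ := t₀) (s := ball t₀ ε)
    (bound := fun _ => M) (a := A) (b := B) (ball_mem_nhds t₀ hε) ?_ ?_ ?_ ?_ ?_ ?_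
  · exact h.2
  · filter_upwards [ball_mem_nhds t₀ hε] with s hs
    exact ((hFc s hs).mono Set.uIoc_subset_uIcc).aestronglyMeasurable measurableSet_uIoc
  · exact (hFc t₀ (mem_ball_self hε)).intervalIntegrable
  · exact (hF'c.mono Set.uIoc_subset_uIcc).aestronglyMeasurable measurableSet_uIoc
  · filter_upwards with x hx s hs
    exact hM x (Set.uIoc_subset_uIcc hx) s hs
  · exact intervalIntegrable_const
  · filter_upwards with x hx s hs
    exact hd x (Set.uIoc_subset_uIcc hx) s hs

lemma mycont {f : ℝ → ℝ → E} {A B C D : ℝ} (hCD : C ≤ D)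
    (hf : ContinuousOn (fun q : ℝ × ℝ => f q.1 q.2) (Set.Icc A B ×ˢ Set.Icc C D)) :
    ContinuousOn (fun x => ∫ ρ in C..D, f x ρ) (Set.Icc A B) := by
  obtain ⟨M, hM⟩ := (((isCompact_Icc (a := A) (b := B)).prod
    (isCompact_Icc (a := C) (b := D))).exists_bound_of_continuousOn hf)
  have key : ContinuousOn (fun x => ∫ ρ in Set.Ioc C D, f x ρ) (Set.Icc A B) := by
    apply continuousOn_of_dominated (bound := fun _ => M)
    · intro x hx
      have : ContinuousOn (fun ρ => f x ρ) (Set.Icc C D) :=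
        hf.comp (f := fun ρ : ℝ => ((x, ρ) : ℝ × ℝ)) (Continuous.continuousOn (by continuity))
          (fun ρ hρ => ⟨hx, hρ⟩)
      exact ((this.mono Set.Ioc_subset_Icc_self).aestronglyMeasurable measurableSet_Ioc)
    · intro x hx
      filter_upwards [ae_restrict_mem measurableSet_Ioc] with ρ hρ
      exact hM (x, ρ) ⟨hx, Set.Ioc_subset_Icc_self hρ⟩
    · exact integrableOn_const measure_Ioc_lt_top.ne
    · filter_upwards [ae_restrict_mem measurableSet_Ioc] with ρ hρ
      exact hf.comp (f := fun x : ℝ => ((x, ρ) : ℝ × ℝ)) (Continuous.continuousOn (by continuity))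
        (fun x hx => ⟨hx, Set.Ioc_subset_Icc_self hρ⟩)
  refine key.congr fun x hx => ?_
  rw [intervalIntegral.integral_of_le hCD]

lemma ball_half_subset {t₀ : ℝ} (ht₀ : 0 < t₀) :
    ball t₀ (t₀ / 2) ⊆ Set.Icc (t₀ / 2) (3 * t₀ / 2) := by
  intro s hs
  rw [mem_ball, Real.dist_eq, abs_lt] at hs
  constructor <;> linarith [hs.1, hs.2]

lemma ball_half_pos {t₀ : ℝ} (ht₀ : 0 < t₀) : ball t₀ (t₀ / 2) ⊆ Set.Ioi 0 := by
  intro s hs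
  rw [mem_ball, Real.dist_eq, abs_lt] at hs
  have : 0 < t₀ / 2 := by linarith
  simp only [Set.mem_Ioi]; linarith [hs.1]

lemma leibniz_app [CompleteSpace E] {F F' : ℝ → ℝ → E} {A B t₀ M : ℝ} (hAB : A ≤ B) (ht₀ : 0 < t₀)
    (hd : ∀ x ∈ Set.Icc A B, ∀ s ∈ Set.Ioi (0:ℝ), HasDerivAt (F x) (F' x s) s)
    (hFc : ∀ s ∈ Set.Ioi (0:ℝ), ContinuousOn (fun x => F x s) (Set.Icc A B))
    (hM : ∀ x ∈ Set.Icc A B, ∀ s ∈ ball t₀ (t₀ / 2), ‖F' x s‖ ≤ M)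
    (hF'c : ContinuousOn (fun x => F' x t₀) (Set.Icc A B)) :
    HasDerivAt (fun s => ∫ x in A..B, F x s) (∫ x in A..B, F' x t₀) t₀ := by
  have huIcc : Set.uIcc A B = Set.Icc A B := Set.uIcc_of_le hAB
  apply myleibniz (ε := t₀ / 2) (M := M) (by linarith)
  · rw [huIcc]; exact fun x hx s hs => hd x hx s (ball_half_pos ht₀ hs)
  · rw [huIcc]; exact fun s hs => hFc s (ball_half_pos ht₀ hs)
  · rw [huIcc]; exact hM
  · rw [huIcc]; exact hF'c

lemma leibniz_app' [CompleteSpace E] {F F' : ℝ → ℝ → E} {A B t₀ : ℝ} (hAB : A ≤ B) (ht₀ : 0 < t₀)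
    (hd : ∀ x ∈ Set.Icc A B, ∀ s ∈ Set.Ioi (0:ℝ), HasDerivAt (F x) (F' x s) s)
    (hFc : ∀ s ∈ Set.Ioi (0:ℝ), ContinuousOn (fun x => F x s) (Set.Icc A B))
    (hF'j : ContinuousOn (fun q : ℝ × ℝ => F' q.1 q.2) (Set.Icc A B ×ˢ Set.Ici 0)) :
    HasDerivAt (fun s => ∫ x in A..B, F x s) (∫ x in A..B, F' x t₀) t₀ := by
  have hsub : Set.Icc A B ×ˢ Set.Icc (t₀ / 2) (3 * t₀ / 2) ⊆ Set.Icc A B ×ˢ Set.Ici 0 := by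
    apply Set.prod_mono_right
    intro s hs; exact le_trans (by linarith : (0:ℝ) ≤ t₀ / 2) hs.1
  obtain ⟨M, hM⟩ := ((isCompact_Icc (a := A) (b := B)).prod
    (isCompact_Icc (a := t₀ / 2) (b := 3 * t₀ / 2))).exists_bound_of_continuousOn (hF'j.mono hsub)
  apply leibniz_app hAB ht₀ hd hFc (M := M)
  · intro x hx s hs
    exact hM (x, s) ⟨hx, ball_half_subset ht₀ hs⟩
  · exact hF'j.comp (f := fun x : ℝ => ((x, t₀) : ℝ × ℝ))
      (Continuous.continuousOn (by continuity)) (fun x hx => ⟨hx, le_of_lt ht₀⟩)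

lemma myintcongr {f g : ℝ → E} {A B : ℝ} (hAB : A ≤ B) (h : ∀ x ∈ Set.Ioo A B, f x = g x) :
    ∫ x in A..B, f x = ∫ x in A..B, g x := by
  apply intervalIntegral.integral_congr_ae
  have h1 : ∀ᵐ x : ℝ, x ≠ B := by
    rw [ae_iff]
    have : {x : ℝ | ¬x ≠ B} = {B} := by ext x; simp [not_not]
    rw [this]
    exact measure_singleton B
  filter_upwards [h1] with x hx hmem
  rw [Set.uIoc_of_le hAB] at hmem
  exact h x ⟨hmem.1, lt_of_le_of_ne hmem.2 hx⟩

lemma deriv_unique_of_eqOn {f g : ℝ → E} {d₁ d₂ : E} {t : ℝ} {s : Set ℝ} (hs : s ∈ nhds t)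
    (heq : ∀ r ∈ s, f r = g r) (h1 : HasDerivAt f d₁ t) (h2 : HasDerivAt g d₂ t) : d₁ = d₂ := by
  have hfe : g =ᶠ[nhds t] f := by filter_upwards [hs] with r hr using (heq r hr).symm
  exact (h1.congr_of_eventuallyEq hfe).unique h2

lemma contOn_mul_conj_re {X : Type*} [TopologicalSpace X] {f g : X → ℂ} {K : Set X} (hf : ContinuousOn f K)
    (hg : ContinuousOn g K) :
    ContinuousOn (fun x => (f x * (starRingEnd ℂ) (g x)).re) K :=
  Complex.continuous_re.comp_continuousOn (hf.mul (Complex.continuous_conj.comp_continuousOn hg))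

variable {Y : Type*} [TopologicalSpace Y]

lemma sliceX {g : ℝ → ℝ → Y} {K T : Set ℝ}
    (h : ContinuousOn (fun q : ℝ × ℝ => g q.1 q.2) (K ×ˢ T)) {s : ℝ} (hs : s ∈ T) :
    ContinuousOn (fun x => g x s) K :=
  h.comp (f := fun x : ℝ => ((x, s) : ℝ × ℝ)) (Continuous.continuousOn (by continuity))
    (fun x hx => ⟨hx, hs⟩)

lemma sliceT {g : ℝ → ℝ → Y} {K T : Set ℝ}
    (h : ContinuousOn (fun q : ℝ × ℝ => g q.1 q.2) (K ×ˢ T)) {x : ℝ} (hx : x ∈ K) :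
    ContinuousOn (fun s => g x s) T :=
  h.comp (f := fun s : ℝ => ((x, s) : ℝ × ℝ)) (Continuous.continuousOn (by continuity))
    (fun s hs => ⟨hx, hs⟩)

lemma slice3XP {g : ℝ → ℝ → ℝ → Y} {K P T : Set ℝ}
    (h : ContinuousOn (fun q : ℝ × ℝ × ℝ => g q.1 q.2.1 q.2.2) (K ×ˢ P ×ˢ T)) {s : ℝ}
    (hs : s ∈ T) : ContinuousOn (fun q : ℝ × ℝ => g q.1 q.2 s) (K ×ˢ P) :=
  h.comp (f := fun q : ℝ × ℝ => ((q.1, q.2, s) : ℝ × ℝ × ℝ)) (Continuous.continuousOn (by continuity))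
    (fun q hq => ⟨hq.1, hq.2, hs⟩)

lemma slice3XT {g : ℝ → ℝ → ℝ → Y} {K P T : Set ℝ}
    (h : ContinuousOn (fun q : ℝ × ℝ × ℝ => g q.1 q.2.1 q.2.2) (K ×ˢ P ×ˢ T)) {ρ : ℝ}
    (hρ : ρ ∈ P) : ContinuousOn (fun q : ℝ × ℝ => g q.1 ρ q.2) (K ×ˢ T) :=
  h.comp (f := fun q : ℝ × ℝ => ((q.1, ρ, q.2) : ℝ × ℝ × ℝ)) (Continuous.continuousOn (by continuity))
    (fun q hq => ⟨hq.1, hρ, hq.2⟩)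

lemma slice3PT {g : ℝ → ℝ → ℝ → Y} {K P T : Set ℝ}
    (h : ContinuousOn (fun q : ℝ × ℝ × ℝ => g q.1 q.2.1 q.2.2) (K ×ˢ P ×ˢ T)) {x : ℝ}
    (hx : x ∈ K) : ContinuousOn (fun q : ℝ × ℝ => g x q.1 q.2) (P ×ˢ T) :=
  h.comp (f := fun q : ℝ × ℝ => ((x, q.1, q.2) : ℝ × ℝ × ℝ)) (Continuous.continuousOn (by continuity))
    (fun q hq => ⟨hx, hq.1, hq.2⟩)

lemma intIntC {f : ℝ → E} {A B : ℝ} (hAB : A ≤ B) (h : ContinuousOn f (Set.Icc A B)) :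
    IntervalIntegrable f volume A B := by
  apply ContinuousOn.intervalIntegrable
  rwa [Set.uIcc_of_le hAB]

lemma intInt_c {c : ℝ → ℝ} {c₀ α γ : ℝ} (hc : ∀ x, c x = if α < x ∧ x < γ then c₀ else 0)
    {g : ℝ → ℝ} {A B : ℝ} (hAB : A ≤ B) (hg : ContinuousOn g (Set.Icc A B)) :
    IntervalIntegrable (fun x => c x * g x) volume A B := by
  rw [intervalIntegrable_iff_integrableOn_Ioc_of_le hAB]
  have hg' : IntegrableOn (fun x => c₀ * g x) (Set.Ioc A B) volume := by
    rw [← intervalIntegrable_iff_integrableOn_Ioc_of_le hAB]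
    exact intIntC hAB (continuousOn_const.mul hg)
  have heq : (fun x => c x * g x) = fun x => (Set.Ioo α γ).indicator (fun x => c₀ * g x) x := by
    funext x
    rw [hc x]
    by_cases h : α < x ∧ x < γ
    · rw [Set.indicator_of_mem (Set.mem_Ioo.2 h), if_pos h]
    · rw [Set.indicator_of_notMem (fun hmem => h (Set.mem_Ioo.1 hmem)), if_neg h, zero_mul]
  rw [heq]
  exact hg'.indicator measurableSet_Ioo

end Helpers

set_option maxHeartbeats 1600000 in

/-- Energy dissipation law (Lemma 2.1) for the coupled wave system with localized
Kelvin–Voigt damping and time delay: the energy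
`E(t) = ½∫₀^L(|u_t|² + a|u_x|²) + ½∫₀^L(|y_t|² + |y_x|²) + (τ|κ₂|/2)∫₀^β∫₀¹|η_x|²`
is differentiable for `t > 0` and
`E′(t) ≤ −(κ₁ − |κ₂|)∫₀^β |η_x(x,0,t)|² dx`.
Functions take the space variable first; subscripted functions are the corresponding
partial derivatives, supplied as data together with `HasDerivAt` and continuity
hypotheses expressing that `u, y` are `C²` and `η` is `C¹` with continuous mixed
partials `η_{xρ}, η_{xt}` on the space-time domain. -/
theorem stmt_0 (L τ a κ₁ κ₂ c₀ α β γ : ℝ)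
    (hL : 0 < L) (hτ : 0 < τ) (ha : 0 < a) (hκ₁ : 0 < κ₁) (hc₀ : 0 < c₀)
    (hκ₂ : κ₂ ≠ 0) (hκ : |κ₂| < κ₁)
    (hα : 0 < α) (hαβ : α < β) (hβγ : β < γ) (hγL : γ < L)
    (c : ℝ → ℝ) (hc : ∀ x, c x = if α < x ∧ x < γ then c₀ else 0)
    (u ut utt ux utx : ℝ → ℝ → ℂ)
    (y yt ytt yx yxx ytx : ℝ → ℝ → ℂ)
    (η ηx ηρ ηt ηxρ ηxt : ℝ → ℝ → ℝ → ℂ)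
    (S Sx : ℝ → ℝ → ℂ)
    -- u is twice continuously differentiable on [0,L] × [0,∞)
    (hut : ∀ x ∈ Set.Icc (0:ℝ) L, ∀ t ∈ Set.Ici (0:ℝ),
      HasDerivAt (fun s => u x s) (ut x t) t)
    (hutt : ∀ x ∈ Set.Icc (0:ℝ) L, ∀ t ∈ Set.Ici (0:ℝ),
      HasDerivAt (fun s => ut x s) (utt x t) t)
    (hux : ∀ t ∈ Set.Ici (0:ℝ), ∀ x ∈ Set.Icc (0:ℝ) L,
      HasDerivAt (fun ξ => u ξ t) (ux x t) x)
    (hutx : ∀ t ∈ Set.Ici (0:ℝ), ∀ x ∈ Set.Icc (0:ℝ) L,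
      HasDerivAt (fun ξ => ut ξ t) (utx x t) x)
    (huxt : ∀ x ∈ Set.Icc (0:ℝ) L, ∀ t ∈ Set.Ici (0:ℝ),
      HasDerivAt (fun s => ux x s) (utx x t) t)
    (hucont : ContinuousOn (fun q : ℝ × ℝ => u q.1 q.2) (Set.Icc 0 L ×ˢ Set.Ici 0))
    (hutcont : ContinuousOn (fun q : ℝ × ℝ => ut q.1 q.2) (Set.Icc 0 L ×ˢ Set.Ici 0))
    (huttcont : ContinuousOn (fun q : ℝ × ℝ => utt q.1 q.2) (Set.Icc 0 L ×ˢ Set.Ici 0))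
    (huxcont : ContinuousOn (fun q : ℝ × ℝ => ux q.1 q.2) (Set.Icc 0 L ×ˢ Set.Ici 0))
    (hutxcont : ContinuousOn (fun q : ℝ × ℝ => utx q.1 q.2) (Set.Icc 0 L ×ˢ Set.Ici 0))
    -- y is twice continuously differentiable on [0,L] × [0,∞)
    (hyt : ∀ x ∈ Set.Icc (0:ℝ) L, ∀ t ∈ Set.Ici (0:ℝ),
      HasDerivAt (fun s => y x s) (yt x t) t)
    (hytt : ∀ x ∈ Set.Icc (0:ℝ) L, ∀ t ∈ Set.Ici (0:ℝ),
      HasDerivAt (fun s => yt x s) (ytt x t) t)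
    (hyx : ∀ t ∈ Set.Ici (0:ℝ), ∀ x ∈ Set.Icc (0:ℝ) L,
      HasDerivAt (fun ξ => y ξ t) (yx x t) x)
    (hyxx : ∀ t ∈ Set.Ici (0:ℝ), ∀ x ∈ Set.Icc (0:ℝ) L,
      HasDerivAt (fun ξ => yx ξ t) (yxx x t) x)
    (hytx : ∀ t ∈ Set.Ici (0:ℝ), ∀ x ∈ Set.Icc (0:ℝ) L,
      HasDerivAt (fun ξ => yt ξ t) (ytx x t) x)
    (hyxt : ∀ x ∈ Set.Icc (0:ℝ) L, ∀ t ∈ Set.Ici (0:ℝ),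
      HasDerivAt (fun s => yx x s) (ytx x t) t)
    (hycont : ContinuousOn (fun q : ℝ × ℝ => y q.1 q.2) (Set.Icc 0 L ×ˢ Set.Ici 0))
    (hytcont : ContinuousOn (fun q : ℝ × ℝ => yt q.1 q.2) (Set.Icc 0 L ×ˢ Set.Ici 0))
    (hyttcont : ContinuousOn (fun q : ℝ × ℝ => ytt q.1 q.2) (Set.Icc 0 L ×ˢ Set.Ici 0))
    (hyxcont : ContinuousOn (fun q : ℝ × ℝ => yx q.1 q.2) (Set.Icc 0 L ×ˢ Set.Ici 0))
    (hyxxcont : ContinuousOn (fun q : ℝ × ℝ => yxx q.1 q.2) (Set.Icc 0 L ×ˢ Set.Ici 0))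
    (hytxcont : ContinuousOn (fun q : ℝ × ℝ => ytx q.1 q.2) (Set.Icc 0 L ×ˢ Set.Ici 0))
    -- η is continuously differentiable with continuous mixed partials η_{xρ}, η_{xt}
    (hηx : ∀ ρ ∈ Set.Icc (0:ℝ) 1, ∀ t ∈ Set.Ici (0:ℝ), ∀ x ∈ Set.Icc (0:ℝ) L,
      HasDerivAt (fun ξ => η ξ ρ t) (ηx x ρ t) x)
    (hηρ : ∀ x ∈ Set.Icc (0:ℝ) L, ∀ t ∈ Set.Ici (0:ℝ), ∀ ρ ∈ Set.Icc (0:ℝ) 1,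
      HasDerivAt (fun r => η x r t) (ηρ x ρ t) ρ)
    (hηt : ∀ x ∈ Set.Icc (0:ℝ) L, ∀ ρ ∈ Set.Icc (0:ℝ) 1, ∀ t ∈ Set.Ici (0:ℝ),
      HasDerivAt (fun s => η x ρ s) (ηt x ρ t) t)
    (hηxρ : ∀ x ∈ Set.Icc (0:ℝ) L, ∀ t ∈ Set.Ici (0:ℝ), ∀ ρ ∈ Set.Icc (0:ℝ) 1,
      HasDerivAt (fun r => ηx x r t) (ηxρ x ρ t) ρ)
    (hηxt : ∀ x ∈ Set.Icc (0:ℝ) L, ∀ ρ ∈ Set.Icc (0:ℝ) 1, ∀ t ∈ Set.Ici (0:ℝ),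
      HasDerivAt (fun s => ηx x ρ s) (ηxt x ρ t) t)
    (hηcont : ContinuousOn (fun q : ℝ × ℝ × ℝ => η q.1 q.2.1 q.2.2)
      (Set.Icc 0 L ×ˢ Set.Icc 0 1 ×ˢ Set.Ici 0))
    (hηxcont : ContinuousOn (fun q : ℝ × ℝ × ℝ => ηx q.1 q.2.1 q.2.2)
      (Set.Icc 0 L ×ˢ Set.Icc 0 1 ×ˢ Set.Ici 0))
    (hηρcont : ContinuousOn (fun q : ℝ × ℝ × ℝ => ηρ q.1 q.2.1 q.2.2)
      (Set.Icc 0 L ×ˢ Set.Icc 0 1 ×ˢ Set.Ici 0))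
    (hηtcont : ContinuousOn (fun q : ℝ × ℝ × ℝ => ηt q.1 q.2.1 q.2.2)
      (Set.Icc 0 L ×ˢ Set.Icc 0 1 ×ˢ Set.Ici 0))
    (hηxρcont : ContinuousOn (fun q : ℝ × ℝ × ℝ => ηxρ q.1 q.2.1 q.2.2)
      (Set.Icc 0 L ×ˢ Set.Icc 0 1 ×ˢ Set.Ici 0))
    (hηxtcont : ContinuousOn (fun q : ℝ × ℝ × ℝ => ηxt q.1 q.2.1 q.2.2)
      (Set.Icc 0 L ×ˢ Set.Icc 0 1 ×ˢ Set.Ici 0))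
    -- (i) the stress S and the first equation
    (hSdef1 : ∀ t ∈ Set.Ioi (0:ℝ), ∀ x ∈ Set.Ioo (0:ℝ) β,
      S x t = (a : ℂ) * ux x t + (κ₁ : ℂ) * utx x t + (κ₂ : ℂ) * ηx x 1 t)
    (hSdef2 : ∀ t ∈ Set.Ioi (0:ℝ), ∀ x ∈ Set.Ioo β L, S x t = (a : ℂ) * ux x t)
    (hSx : ∀ t ∈ Set.Ioi (0:ℝ), ∀ x ∈ Set.Icc (0:ℝ) L,
      HasDerivAt (fun ξ => S ξ t) (Sx x t) x)
    (hSxcont : ∀ t ∈ Set.Ioi (0:ℝ), ContinuousOn (fun x => Sx x t) (Set.Icc 0 L))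
    (heq1 : ∀ x ∈ Set.Ioo (0:ℝ) L, ∀ t ∈ Set.Ioi (0:ℝ),
      utt x t - Sx x t + (c x : ℂ) * yt x t = 0)
    -- (ii) the second wave equation
    (heq2 : ∀ x ∈ Set.Ioo (0:ℝ) L, ∀ t ∈ Set.Ioi (0:ℝ),
      ytt x t - yxx x t - (c x : ℂ) * ut x t = 0)
    -- (iii) the transport equation
    (heq3 : ∀ x ∈ Set.Ioo (0:ℝ) L, ∀ ρ ∈ Set.Ioo (0:ℝ) 1, ∀ t ∈ Set.Ioi (0:ℝ),
      (τ : ℂ) * ηt x ρ t + ηρ x ρ t = 0)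
    -- (iv) boundary conditions
    (hbc : ∀ t ∈ Set.Ioi (0:ℝ), u 0 t = 0 ∧ u L t = 0 ∧ y 0 t = 0 ∧ y L t = 0)
    (hηbc : ∀ t ∈ Set.Ioi (0:ℝ), ∀ ρ ∈ Set.Ioo (0:ℝ) 1, η 0 ρ t = 0)
    -- (v) compatibility condition
    (hη0 : ∀ x ∈ Set.Icc (0:ℝ) L, ∀ t ∈ Set.Ici (0:ℝ), η x 0 t = ut x t) :
    ∀ t ∈ Set.Ioi (0:ℝ), ∃ d : ℝ,
      HasDerivAt (fun s =>
          (1 / 2) * (∫ x in (0:ℝ)..L, (‖ut x s‖ ^ 2 + a * ‖ux x s‖ ^ 2))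
          + (1 / 2) * (∫ x in (0:ℝ)..L, (‖yt x s‖ ^ 2 + ‖yx x s‖ ^ 2))
          + (τ * |κ₂| / 2) * (∫ x in (0:ℝ)..β, ∫ ρ in (0:ℝ)..1, ‖ηx x ρ s‖ ^ 2)) d t
      ∧ d ≤ -(κ₁ - |κ₂|) * ∫ x in (0:ℝ)..β, ‖ηx x 0 t‖ ^ 2 := by
  intro t ht
  have ht0 : (0:ℝ) < t := ht
  have htI : t ∈ Set.Ici (0:ℝ) := le_of_lt ht0
  have hL0 : (0:ℝ) ≤ L := le_of_lt hL
  have hβpos : (0:ℝ) < β := lt_trans hα hαβ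
  have hβ0 : (0:ℝ) ≤ β := le_of_lt hβpos
  have hβL : β < L := lt_trans hβγ hγL
  have hβL' : β ≤ L := le_of_lt hβL
  have h01 : (0:ℝ) ≤ 1 := zero_le_one
  have hsub0β : Set.Icc (0:ℝ) β ⊆ Set.Icc 0 L := Set.Icc_subset_Icc le_rfl hβL'
  have hsubβL : Set.Icc β L ⊆ Set.Icc 0 L := Set.Icc_subset_Icc hβ0 le_rfl
  have h0L : (0:ℝ) ∈ Set.Icc (0:ℝ) L := ⟨le_rfl, hL0⟩
  have hLmem : L ∈ Set.Icc (0:ℝ) L := ⟨hL0, le_rfl⟩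
  have h0P : (0:ℝ) ∈ Set.Icc (0:ℝ) 1 := ⟨le_rfl, zero_le_one⟩
  have h1P : (1:ℝ) ∈ Set.Icc (0:ℝ) 1 := ⟨zero_le_one, le_rfl⟩
  -- slice continuity at time t
  have cut : ContinuousOn (fun x => ut x t) (Set.Icc 0 L) := sliceX hutcont htI
  have cutt : ContinuousOn (fun x => utt x t) (Set.Icc 0 L) := sliceX huttcont htI
  have cux : ContinuousOn (fun x => ux x t) (Set.Icc 0 L) := sliceX huxcont htI
  have cutx : ContinuousOn (fun x => utx x t) (Set.Icc 0 L) := sliceX hutxcont htI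
  have cyt : ContinuousOn (fun x => yt x t) (Set.Icc 0 L) := sliceX hytcont htI
  have cytt : ContinuousOn (fun x => ytt x t) (Set.Icc 0 L) := sliceX hyttcont htI
  have cyx : ContinuousOn (fun x => yx x t) (Set.Icc 0 L) := sliceX hyxcont htI
  have cyxx : ContinuousOn (fun x => yxx x t) (Set.Icc 0 L) := sliceX hyxxcont htI
  have cytx : ContinuousOn (fun x => ytx x t) (Set.Icc 0 L) := sliceX hytxcont htI
  have cS : ContinuousOn (fun x => S x t) (Set.Icc 0 L) :=
    fun x hx => (hSx t ht x hx).continuousAt.continuousWithinAt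
  have cSx : ContinuousOn (fun x => Sx x t) (Set.Icc 0 L) := hSxcont t ht
  have cηx0 : ContinuousOn (fun x => ηx x 0 t) (Set.Icc 0 L) :=
    sliceX (slice3XT hηxcont h0P) htI
  have cηx1 : ContinuousOn (fun x => ηx x 1 t) (Set.Icc 0 L) :=
    sliceX (slice3XT hηxcont h1P) htI
  -- boundary values
  have hut0 : ut 0 t = 0 :=
    deriv_unique_of_eqOn (Ioi_mem_nhds ht0) (fun r hr => (hbc r hr).1)
      (hut 0 h0L t htI) (hasDerivAt_const t 0)
  have hutL : ut L t = 0 :=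
    deriv_unique_of_eqOn (Ioi_mem_nhds ht0) (fun r hr => (hbc r hr).2.1)
      (hut L hLmem t htI) (hasDerivAt_const t 0)
  have hyt0 : yt 0 t = 0 :=
    deriv_unique_of_eqOn (Ioi_mem_nhds ht0) (fun r hr => (hbc r hr).2.2.1)
      (hyt 0 h0L t htI) (hasDerivAt_const t 0)
  have hytL : yt L t = 0 :=
    deriv_unique_of_eqOn (Ioi_mem_nhds ht0) (fun r hr => (hbc r hr).2.2.2)
      (hyt L hLmem t htI) (hasDerivAt_const t 0)
  -- compatibility: ηx at ρ = 0
  have hA2 : ∀ x ∈ Set.Ioo (0:ℝ) L, ηx x 0 t = utx x t := by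
    intro x hx
    exact deriv_unique_of_eqOn (Icc_mem_nhds hx.1 hx.2) (fun r hr => hη0 r hr t htI)
      (hηx 0 h0P t htI x (Set.Ioo_subset_Icc_self hx)) (hutx t htI x (Set.Ioo_subset_Icc_self hx))
  -- differentiated transport equation
  have hA3 : ∀ ρ ∈ Set.Ioo (0:ℝ) 1, ∀ x ∈ Set.Ioo (0:ℝ) L,
      (τ:ℂ) * ηxt x ρ t + ηxρ x ρ t = 0 := by
    intro ρ hρ
    have hρI : ρ ∈ Set.Icc (0:ℝ) 1 := Set.Ioo_subset_Icc_self hρ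
    have cηxt : ContinuousOn (fun ξ => ηxt ξ ρ t) (Set.Icc 0 L) :=
      sliceX (slice3XT hηxtcont hρI) htI
    have cηxρ : ContinuousOn (fun ξ => ηxρ ξ ρ t) (Set.Icc 0 L) :=
      sliceX (slice3XT hηxρcont hρI) htI
    have hftc : ∀ x ∈ Set.Icc (0:ℝ) L, ∀ r ∈ Set.Icc (0:ℝ) 1, ∀ s ∈ Set.Ici (0:ℝ),
        η x r s = η 0 r s + ∫ ξ in (0:ℝ)..x, ηx ξ r s := by
      intro x hx r hr s hs
      have hxL : Set.Icc (0:ℝ) x ⊆ Set.Icc 0 L := Set.Icc_subset_Icc le_rfl hx.2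
      have h2 : ∫ ξ in (0:ℝ)..x, ηx ξ r s = η x r s - η 0 r s := by
        apply intervalIntegral.integral_eq_sub_of_hasDerivAt
        · intro ξ hξ
          rw [Set.uIcc_of_le hx.1] at hξ
          exact hηx r hr s hs ξ (hxL hξ)
        · apply ContinuousOn.intervalIntegrable
          rw [Set.uIcc_of_le hx.1]
          exact (sliceX (slice3XT hηxcont hr) hs).mono hxL
      rw [h2]; ring
    have hstart : ∀ x ∈ Set.Icc (0:ℝ) L,
        ηt x ρ t = ηt 0 ρ t + ∫ ξ in (0:ℝ)..x, ηxt ξ ρ t := by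
      intro x hx
      have hxL : Set.Icc (0:ℝ) x ⊆ Set.Icc 0 L := Set.Icc_subset_Icc le_rfl hx.2
      refine deriv_unique_of_eqOn (Ioi_mem_nhds ht0)
        (fun s hs => hftc x hx ρ hρI s (Set.Ioi_subset_Ici_self hs)) (hηt x hx ρ hρI t htI) ?_
      refine (hηt 0 h0L ρ hρI t htI).add ?_
      apply leibniz_app' (F := fun ξ s => ηx ξ ρ s) (F' := fun ξ s => ηxt ξ ρ s) hx.1 ht0
      · intro ξ hξ s hs
        exact hηxt ξ (hxL hξ) ρ hρI s (Set.Ioi_subset_Ici_self hs)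
      · intro s hs
        exact (sliceX (slice3XT hηxcont hρI) (Set.Ioi_subset_Ici_self hs)).mono hxL
      · exact (slice3XT hηxtcont hρI).mono (Set.prod_mono_left hxL)
    have hstarρ : ∀ x ∈ Set.Icc (0:ℝ) L,
        ηρ x ρ t = ηρ 0 ρ t + ∫ ξ in (0:ℝ)..x, ηxρ ξ ρ t := by
      intro x hx
      have hxL : Set.Icc (0:ℝ) x ⊆ Set.Icc 0 L := Set.Icc_subset_Icc le_rfl hx.2
      obtain ⟨M3, hM3⟩ := ((isCompact_Icc (a := (0:ℝ)) (b := L)).prod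
        (isCompact_Icc (a := (0:ℝ)) (b := 1))).exists_bound_of_continuousOn
        (slice3XP hηxρcont htI)
      have hε : 0 < min ρ (1 - ρ) := lt_min hρ.1 (by linarith [hρ.2])
      have hballP : Metric.ball ρ (min ρ (1 - ρ)) ⊆ Set.Icc (0:ℝ) 1 := by
        intro r hr
        rw [Metric.mem_ball, Real.dist_eq, abs_lt] at hr
        have h1 := min_le_left ρ (1-ρ); have h2 := min_le_right ρ (1-ρ)
        constructor
        · linarith [hr.1]
        · linarith [hr.2]
      refine deriv_unique_of_eqOn (Ioo_mem_nhds hρ.1 hρ.2)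
        (fun r hr => hftc x hx r (Set.Ioo_subset_Icc_self hr) t htI)
        (hηρ x hx t htI ρ hρI) ?_
      refine (hηρ 0 h0L t htI ρ hρI).add ?_
      have huIcc : Set.uIcc (0:ℝ) x = Set.Icc 0 x := Set.uIcc_of_le hx.1
      apply myleibniz (F := fun ξ r => ηx ξ r t) (F' := fun ξ r => ηxρ ξ r t)
        (ε := min ρ (1 - ρ)) (M := M3) hε
      · rw [huIcc]; intro ξ hξ r hr
        exact hηxρ ξ (hxL hξ) t htI r (hballP hr)
      · rw [huIcc]; intro r hr
        exact (sliceX (g := fun ξ r => ηx ξ r t) (slice3XP hηxcont htI) (hballP hr)).mono hxL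
      · rw [huIcc]; intro ξ hξ r hr
        exact hM3 (ξ, r) ⟨hxL hξ, hballP hr⟩
      · rw [huIcc]
        exact (sliceX (g := fun ξ r => ηxρ ξ r t) (slice3XP hηxρcont htI) hρI).mono hxL
    intro x hx
    set g : ℝ → ℂ := fun ξ => (τ:ℂ) * ηxt ξ ρ t + ηxρ ξ ρ t with hgdef
    have cg : ContinuousOn g (Set.Icc 0 L) := (continuousOn_const.mul cηxt).add cηxρ
    have hφconst : ∀ z ∈ Set.Ioo (0:ℝ) L,
        (∫ ξ in (0:ℝ)..z, g ξ) = -((τ:ℂ) * ηt 0 ρ t + ηρ 0 ρ t) := by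
      intro z hz
      have hzI : z ∈ Set.Icc (0:ℝ) L := Set.Ioo_subset_Icc_self hz
      have hzL : Set.Icc (0:ℝ) z ⊆ Set.Icc 0 L := Set.Icc_subset_Icc le_rfl hzI.2
      have i1 : IntervalIntegrable (fun ξ => (τ:ℂ) * ηxt ξ ρ t) volume 0 z := by
        apply ContinuousOn.intervalIntegrable
        rw [Set.uIcc_of_le hzI.1]
        exact (continuousOn_const.mul cηxt).mono hzL
      have i2 : IntervalIntegrable (fun ξ => ηxρ ξ ρ t) volume 0 z := by
        apply ContinuousOn.intervalIntegrable
        rw [Set.uIcc_of_le hzI.1]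
        exact cηxρ.mono hzL
      have e1 := hstart z hzI
      have e2 := hstarρ z hzI
      have e3 := heq3 z hz ρ hρ t ht
      have e5 : (∫ ξ in (0:ℝ)..z, ((τ:ℂ) * ηxt ξ ρ t + ηxρ ξ ρ t))
          = (τ:ℂ) * (∫ ξ in (0:ℝ)..z, ηxt ξ ρ t) + ∫ ξ in (0:ℝ)..z, ηxρ ξ ρ t := by
        rw [intervalIntegral.integral_add i1 i2, intervalIntegral.integral_const_mul]
      have f1 : (∫ ξ in (0:ℝ)..z, ηxt ξ ρ t) = ηt z ρ t - ηt 0 ρ t := by rw [e1]; ring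
      have f2 : (∫ ξ in (0:ℝ)..z, ηxρ ξ ρ t) = ηρ z ρ t - ηρ 0 ρ t := by rw [e2]; ring
      show (∫ ξ in (0:ℝ)..z, ((τ:ℂ) * ηxt ξ ρ t + ηxρ ξ ρ t)) = _
      rw [e5, f1, f2]
      linear_combination e3
    have hdφ : HasDerivAt (fun z => ∫ ξ in (0:ℝ)..z, g ξ) (g x) x := by
      apply intervalIntegral.integral_hasDerivAt_right
      · apply ContinuousOn.intervalIntegrable
        rw [Set.uIcc_of_le (le_of_lt hx.1)]
        exact cg.mono (Set.Icc_subset_Icc le_rfl (le_of_lt hx.2))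
      · exact ⟨Set.Ioo 0 L, Ioo_mem_nhds hx.1 hx.2,
          (cg.mono Set.Ioo_subset_Icc_self).aestronglyMeasurable measurableSet_Ioo⟩
      · exact cg.continuousAt (Icc_mem_nhds hx.1 hx.2)
    have hfin := deriv_unique_of_eqOn (Ioo_mem_nhds hx.1 hx.2) hφconst hdφ
      (hasDerivAt_const x (-((τ:ℂ) * ηt 0 ρ t + ηρ 0 ρ t)))
    simpa [hgdef] using hfin
  -- the candidate derivative
  refine ⟨(1/2) * (∫ x in (0:ℝ)..L, (2*((utt x t) * (starRingEnd ℂ) (ut x t)).re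
          + a * (2*((utx x t) * (starRingEnd ℂ) (ux x t)).re)))
        + (1/2) * (∫ x in (0:ℝ)..L, (2*((ytt x t) * (starRingEnd ℂ) (yt x t)).re
          + 2*((ytx x t) * (starRingEnd ℂ) (yx x t)).re))
        + (τ*|κ₂|/2) * (∫ x in (0:ℝ)..β, ∫ ρ in (0:ℝ)..1,
            2*((ηxt x ρ t) * (starRingEnd ℂ) (ηx x ρ t)).re), ?_, ?_⟩
  · -- differentiability of the energy
    refine HasDerivAt.add (HasDerivAt.add ?_ ?_) ?_
    · apply HasDerivAt.const_mul
      apply leibniz_app' (F := fun x s => ‖ut x s‖^2 + a * ‖ux x s‖^2)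
        (F' := fun x s => 2*((utt x s) * (starRingEnd ℂ) (ut x s)).re
          + a * (2*((utx x s) * (starRingEnd ℂ) (ux x s)).re)) hL0 ht0
      · intro x hx s hs
        exact (mynormsq (hutt x hx s (Set.Ioi_subset_Ici_self hs))).add
          ((mynormsq (huxt x hx s (Set.Ioi_subset_Ici_self hs))).const_mul a)
      · intro s hs
        exact ((sliceX hutcont (Set.Ioi_subset_Ici_self hs)).norm.pow 2).add
          (continuousOn_const.mul ((sliceX huxcont (Set.Ioi_subset_Ici_self hs)).norm.pow 2))
      · exact (continuousOn_const.mul (contOn_mul_conj_re huttcont hutcont)).add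
          (continuousOn_const.mul (continuousOn_const.mul
            (contOn_mul_conj_re hutxcont huxcont)))
    · apply HasDerivAt.const_mul
      apply leibniz_app' (F := fun x s => ‖yt x s‖^2 + ‖yx x s‖^2)
        (F' := fun x s => 2*((ytt x s) * (starRingEnd ℂ) (yt x s)).re
          + 2*((ytx x s) * (starRingEnd ℂ) (yx x s)).re) hL0 ht0
      · intro x hx s hs
        exact (mynormsq (hytt x hx s (Set.Ioi_subset_Ici_self hs))).add
          (mynormsq (hyxt x hx s (Set.Ioi_subset_Ici_self hs)))
      · intro s hs
        exact ((sliceX hytcont (Set.Ioi_subset_Ici_self hs)).norm.pow 2).add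
          ((sliceX hyxcont (Set.Ioi_subset_Ici_self hs)).norm.pow 2)
      · exact (continuousOn_const.mul (contOn_mul_conj_re hyttcont hytcont)).add
          (continuousOn_const.mul (contOn_mul_conj_re hytxcont hyxcont))
    · apply HasDerivAt.const_mul
      have hJsub : Set.Icc (t/2) (3*t/2) ⊆ Set.Ici (0:ℝ) :=
        fun s hs => le_trans (by linarith : (0:ℝ) ≤ t/2) hs.1
      have hQsub : Set.Icc (0:ℝ) L ×ˢ Set.Icc (0:ℝ) 1 ×ˢ Set.Icc (t/2) (3*t/2)
          ⊆ Set.Icc (0:ℝ) L ×ˢ Set.Icc (0:ℝ) 1 ×ˢ Set.Ici 0 :=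
        Set.prod_mono_right (Set.prod_mono_right hJsub)
      have hQc : IsCompact (Set.Icc (0:ℝ) L ×ˢ Set.Icc (0:ℝ) 1 ×ˢ Set.Icc (t/2) (3*t/2)) :=
        (isCompact_Icc).prod ((isCompact_Icc).prod isCompact_Icc)
      obtain ⟨M1, hM1⟩ := hQc.exists_bound_of_continuousOn (hηxcont.mono hQsub)
      obtain ⟨M2, hM2⟩ := hQc.exists_bound_of_continuousOn (hηxtcont.mono hQsub)
      apply leibniz_app (F := fun x s => ∫ ρ in (0:ℝ)..1, ‖ηx x ρ s‖^2)
        (F' := fun x s => ∫ ρ in (0:ℝ)..1, 2*((ηxt x ρ s) * (starRingEnd ℂ) (ηx x ρ s)).re)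
        (M := 2*M2*M1) hβ0 ht0
      · intro x hx s hs
        apply leibniz_app' (F := fun ρ s => ‖ηx x ρ s‖^2)
          (F' := fun ρ s => 2*((ηxt x ρ s) * (starRingEnd ℂ) (ηx x ρ s)).re) h01 hs
        · intro ρ hρ s' hs'
          exact mynormsq (hηxt x (hsub0β hx) ρ hρ s' (Set.Ioi_subset_Ici_self hs'))
        · intro s' hs'
          exact ((sliceX (g := fun ρ s => ηx x ρ s) (slice3PT hηxcont (hsub0β hx))
            (Set.Ioi_subset_Ici_self hs')).norm.pow 2)
        · exact continuousOn_const.mul (contOn_mul_conj_re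
            (slice3PT hηxtcont (hsub0β hx)) (slice3PT hηxcont (hsub0β hx)))
      · intro s hs
        apply mycont (f := fun x ρ => ‖ηx x ρ s‖^2) h01
        exact ((slice3XP hηxcont (Set.Ioi_subset_Ici_self hs)).mono (Set.prod_mono_left hsub0β)).norm.pow 2
      · intro x hx s hs
        have hsJ : s ∈ Set.Icc (t/2) (3*t/2) := ball_half_subset ht0 hs
        have key : ∀ ρ ∈ Set.uIoc (0:ℝ) 1,
            ‖2*((ηxt x ρ s) * (starRingEnd ℂ) (ηx x ρ s)).re‖ ≤ 2*M2*M1 := by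
          intro ρ hρ
          have hρI : ρ ∈ Set.Icc (0:ℝ) 1 := by
            rw [Set.uIoc_of_le h01] at hρ; exact Set.Ioc_subset_Icc_self hρ
          have b1 := hM1 (x, ρ, s) ⟨hsub0β hx, hρI, hsJ⟩
          have b2 := hM2 (x, ρ, s) ⟨hsub0β hx, hρI, hsJ⟩
          have hre : |((ηxt x ρ s) * (starRingEnd ℂ) (ηx x ρ s)).re|
              ≤ ‖ηxt x ρ s‖ * ‖ηx x ρ s‖ := by
            calc |((ηxt x ρ s) * (starRingEnd ℂ) (ηx x ρ s)).re|
                ≤ ‖(ηxt x ρ s) * (starRingEnd ℂ) (ηx x ρ s)‖ := Complex.abs_re_le_norm _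
              _ = ‖ηxt x ρ s‖ * ‖(starRingEnd ℂ) (ηx x ρ s)‖ := norm_mul _ _
              _ = ‖ηxt x ρ s‖ * ‖ηx x ρ s‖ := by rw [RCLike.norm_conj]
          rw [Real.norm_eq_abs, abs_mul, show |(2:ℝ)| = 2 from by norm_num]
          nlinarith [norm_nonneg (ηxt x ρ s), norm_nonneg (ηx x ρ s), abs_nonneg
            (((ηxt x ρ s) * (starRingEnd ℂ) (ηx x ρ s)).re)]
        calc ‖∫ ρ in (0:ℝ)..1, 2*((ηxt x ρ s) * (starRingEnd ℂ) (ηx x ρ s)).re‖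
            ≤ (2*M2*M1) * |1 - 0| := intervalIntegral.norm_integral_le_of_norm_le_const key
          _ = 2*M2*M1 := by norm_num
      · apply mycont (f := fun x ρ => 2*((ηxt x ρ t) * (starRingEnd ℂ) (ηx x ρ t)).re) h01
        exact continuousOn_const.mul (contOn_mul_conj_re
          ((slice3XP hηxtcont htI).mono (Set.prod_mono_left hsub0β))
          ((slice3XP hηxcont htI).mono (Set.prod_mono_left hsub0β)))
  · -- the dissipation estimate
    have cjswap : ∀ z w : ℂ, (z * (starRingEnd ℂ) w).re = (w * (starRingEnd ℂ) z).re := by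
      intro z w
      simp only [Complex.mul_re, Complex.conj_re, Complex.conj_im]
      ring
    have renormsq : ∀ z : ℂ, (z * (starRingEnd ℂ) z).re = ‖z‖^2 := by
      intro z; rw [Complex.mul_conj, Complex.ofReal_re, ← Complex.sq_norm]
    have habs : ∀ z w : ℂ, |(z * (starRingEnd ℂ) w).re| ≤ ‖z‖ * ‖w‖ := by
      intro z w
      calc |(z * (starRingEnd ℂ) w).re| ≤ ‖z * (starRingEnd ℂ) w‖ := Complex.abs_re_le_norm _
        _ = ‖z‖ * ‖(starRingEnd ℂ) w‖ := norm_mul _ _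
        _ = ‖z‖ * ‖w‖ := by rw [RCLike.norm_conj]
    -- interval integrability at time t
    have iuttut := intIntC hL0 (contOn_mul_conj_re cutt cut)
    have iutxux := intIntC hL0 (contOn_mul_conj_re cutx cux)
    have iSxut := intIntC hL0 (contOn_mul_conj_re cSx cut)
    have iSutx := intIntC hL0 (contOn_mul_conj_re cS cutx)
    have iuxutx := intIntC hL0 (contOn_mul_conj_re cux cutx)
    have icyu := intInt_c hc hL0 (contOn_mul_conj_re cyt cut)
    have icuy := intInt_c hc hL0 (contOn_mul_conj_re cut cyt)
    have iyttyt := intIntC hL0 (contOn_mul_conj_re cytt cyt)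
    have iytxyx := intIntC hL0 (contOn_mul_conj_re cytx cyx)
    have iyxxyt := intIntC hL0 (contOn_mul_conj_re cyxx cyt)
    have iyxytx := intIntC hL0 (contOn_mul_conj_re cyx cytx)
    have iuxutxβ := intIntC hβ0 ((contOn_mul_conj_re cux cutx).mono hsub0β)
    have iutxsqβ : IntervalIntegrable (fun x => ‖utx x t‖^2) volume 0 β :=
      intIntC hβ0 (((cutx.mono hsub0β).norm).pow 2)
    have iηx1utxβ := intIntC hβ0 ((contOn_mul_conj_re cηx1 cutx).mono hsub0β)
    have iηx1sqβ : IntervalIntegrable (fun x => ‖ηx x 1 t‖^2) volume 0 β :=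
      intIntC hβ0 (((cηx1.mono hsub0β).norm).pow 2)
    -- integration by parts for u
    have hIBP1 : (∫ x in (0:ℝ)..L, ((Sx x t * (starRingEnd ℂ) (ut x t)).re
        + (S x t * (starRingEnd ℂ) (utx x t)).re)) = 0 := by
      have hftc := intervalIntegral.integral_eq_sub_of_hasDerivAt (a := (0:ℝ)) (b := L)
        (f := fun x => (S x t * (starRingEnd ℂ) (ut x t)).re)
        (f' := fun x => (Sx x t * (starRingEnd ℂ) (ut x t)).re
          + (S x t * (starRingEnd ℂ) (utx x t)).re) ?_ ?_
      · rw [hftc, hutL, hut0]; simp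
      · intro x hx
        rw [Set.uIcc_of_le hL0] at hx
        have hD := (hSx t ht x hx).mul ((hutx t htI x hx).star)
        have := myre hD
        simpa [Complex.add_re] using this
      · exact intIntC hL0 ((contOn_mul_conj_re cSx cut).add (contOn_mul_conj_re cS cutx))
    have hI1 : (∫ x in (0:ℝ)..L, (utt x t * (starRingEnd ℂ) (ut x t)).re)
        = - (∫ x in (0:ℝ)..L, (S x t * (starRingEnd ℂ) (utx x t)).re)
          - (∫ x in (0:ℝ)..L, c x * (yt x t * (starRingEnd ℂ) (ut x t)).re) := by
      have e : (∫ x in (0:ℝ)..L, (utt x t * (starRingEnd ℂ) (ut x t)).re)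
          = ∫ x in (0:ℝ)..L, ((Sx x t * (starRingEnd ℂ) (ut x t)).re
              - c x * (yt x t * (starRingEnd ℂ) (ut x t)).re) := by
        apply myintcongr hL0
        intro x hx
        have h2 : utt x t = Sx x t - (c x : ℂ) * yt x t := by linear_combination heq1 x hx t ht
        rw [h2, sub_mul, mul_assoc, Complex.sub_re, Complex.re_ofReal_mul]
      rw [e, intervalIntegral.integral_sub iSxut icyu]
      have e2 := intervalIntegral.integral_add iSxut iSutx
      rw [hIBP1] at e2
      linarith [e2]
    -- split the S-integral at β
    have hadjS : (∫ x in (0:ℝ)..β, (S x t * (starRingEnd ℂ) (utx x t)).re)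
        + (∫ x in β..L, (S x t * (starRingEnd ℂ) (utx x t)).re)
        = ∫ x in (0:ℝ)..L, (S x t * (starRingEnd ℂ) (utx x t)).re :=
      intervalIntegral.integral_add_adjacent_intervals
        (intIntC hβ0 ((contOn_mul_conj_re cS cutx).mono hsub0β))
        (intIntC hβL' ((contOn_mul_conj_re cS cutx).mono hsubβL))
    have hadjux : (∫ x in (0:ℝ)..β, (ux x t * (starRingEnd ℂ) (utx x t)).re)
        + (∫ x in β..L, (ux x t * (starRingEnd ℂ) (utx x t)).re)
        = ∫ x in (0:ℝ)..L, (ux x t * (starRingEnd ℂ) (utx x t)).re :=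
      intervalIntegral.integral_add_adjacent_intervals iuxutxβ
        (intIntC hβL' ((contOn_mul_conj_re cux cutx).mono hsubβL))
    have hS1 : (∫ x in (0:ℝ)..β, (S x t * (starRingEnd ℂ) (utx x t)).re)
        = a * (∫ x in (0:ℝ)..β, (ux x t * (starRingEnd ℂ) (utx x t)).re)
          + κ₁ * (∫ x in (0:ℝ)..β, ‖utx x t‖^2)
          + κ₂ * (∫ x in (0:ℝ)..β, (ηx x 1 t * (starRingEnd ℂ) (utx x t)).re) := by
      have e : (∫ x in (0:ℝ)..β, (S x t * (starRingEnd ℂ) (utx x t)).re)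
          = ∫ x in (0:ℝ)..β, (a * (ux x t * (starRingEnd ℂ) (utx x t)).re
              + κ₁ * ‖utx x t‖^2
              + κ₂ * (ηx x 1 t * (starRingEnd ℂ) (utx x t)).re) := by
        apply myintcongr hβ0
        intro x hx
        rw [hSdef1 t ht x hx, add_mul, add_mul, Complex.add_re, Complex.add_re,
          mul_assoc, mul_assoc, mul_assoc, Complex.re_ofReal_mul, Complex.re_ofReal_mul,
          Complex.re_ofReal_mul, renormsq]
      rw [e, intervalIntegral.integral_add ((iuxutxβ.const_mul a).add
          (iutxsqβ.const_mul κ₁)) (iηx1utxβ.const_mul κ₂),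
        intervalIntegral.integral_add (iuxutxβ.const_mul a) (iutxsqβ.const_mul κ₁),
        intervalIntegral.integral_const_mul, intervalIntegral.integral_const_mul,
        intervalIntegral.integral_const_mul]
    have hS2 : (∫ x in β..L, (S x t * (starRingEnd ℂ) (utx x t)).re)
        = a * ∫ x in β..L, (ux x t * (starRingEnd ℂ) (utx x t)).re := by
      have e : (∫ x in β..L, (S x t * (starRingEnd ℂ) (utx x t)).re)
          = ∫ x in β..L, a * (ux x t * (starRingEnd ℂ) (utx x t)).re := by
        apply myintcongr hβL'
        intro x hx
        rw [hSdef2 t ht x hx, mul_assoc, Complex.re_ofReal_mul]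
      rw [e, intervalIntegral.integral_const_mul]
    have hswap1 : (∫ x in (0:ℝ)..L, (utx x t * (starRingEnd ℂ) (ux x t)).re)
        = ∫ x in (0:ℝ)..L, (ux x t * (starRingEnd ℂ) (utx x t)).re :=
      intervalIntegral.integral_congr (fun x _ => cjswap _ _)
    have hd1 : (∫ x in (0:ℝ)..L, (2*((utt x t) * (starRingEnd ℂ) (ut x t)).re
          + a * (2*((utx x t) * (starRingEnd ℂ) (ux x t)).re)))
        = -2*κ₁*(∫ x in (0:ℝ)..β, ‖utx x t‖^2)
          - 2*κ₂*(∫ x in (0:ℝ)..β, (ηx x 1 t * (starRingEnd ℂ) (utx x t)).re)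
          - 2*(∫ x in (0:ℝ)..L, c x * (yt x t * (starRingEnd ℂ) (ut x t)).re) := by
      rw [intervalIntegral.integral_add (iuttut.const_mul 2) ((iutxux.const_mul 2).const_mul a),
        intervalIntegral.integral_const_mul, intervalIntegral.integral_const_mul,
        intervalIntegral.integral_const_mul, hI1, hswap1, ← hadjS, hS1, hS2, ← hadjux]
      ring
    -- integration by parts for y
    have hIBP2 : (∫ x in (0:ℝ)..L, ((yxx x t * (starRingEnd ℂ) (yt x t)).re
        + (yx x t * (starRingEnd ℂ) (ytx x t)).re)) = 0 := by
      have hftc := intervalIntegral.integral_eq_sub_of_hasDerivAt (a := (0:ℝ)) (b := L)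
        (f := fun x => (yx x t * (starRingEnd ℂ) (yt x t)).re)
        (f' := fun x => (yxx x t * (starRingEnd ℂ) (yt x t)).re
          + (yx x t * (starRingEnd ℂ) (ytx x t)).re) ?_ ?_
      · rw [hftc, hytL, hyt0]; simp
      · intro x hx
        rw [Set.uIcc_of_le hL0] at hx
        have hD := (hyxx t htI x hx).mul ((hytx t htI x hx).star)
        have := myre hD
        simpa [Complex.add_re] using this
      · exact intIntC hL0 ((contOn_mul_conj_re cyxx cyt).add (contOn_mul_conj_re cyx cytx))
    have hI2 : (∫ x in (0:ℝ)..L, (ytt x t * (starRingEnd ℂ) (yt x t)).re)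
        = (∫ x in (0:ℝ)..L, (yxx x t * (starRingEnd ℂ) (yt x t)).re)
          + ∫ x in (0:ℝ)..L, c x * (ut x t * (starRingEnd ℂ) (yt x t)).re := by
      have e : (∫ x in (0:ℝ)..L, (ytt x t * (starRingEnd ℂ) (yt x t)).re)
          = ∫ x in (0:ℝ)..L, ((yxx x t * (starRingEnd ℂ) (yt x t)).re
              + c x * (ut x t * (starRingEnd ℂ) (yt x t)).re) := by
        apply myintcongr hL0
        intro x hx
        have h2 : ytt x t = yxx x t + (c x : ℂ) * ut x t := by linear_combination heq2 x hx t ht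
        rw [h2, add_mul, mul_assoc, Complex.add_re, Complex.re_ofReal_mul]
      rw [e, intervalIntegral.integral_add iyxxyt icuy]
    have hswap2 : (∫ x in (0:ℝ)..L, (ytx x t * (starRingEnd ℂ) (yx x t)).re)
        = ∫ x in (0:ℝ)..L, (yx x t * (starRingEnd ℂ) (ytx x t)).re :=
      intervalIntegral.integral_congr (fun x _ => cjswap _ _)
    have hswapc : (∫ x in (0:ℝ)..L, c x * (ut x t * (starRingEnd ℂ) (yt x t)).re)
        = ∫ x in (0:ℝ)..L, c x * (yt x t * (starRingEnd ℂ) (ut x t)).re :=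
      intervalIntegral.integral_congr (fun x _ => by rw [cjswap])
    have hd2 : (∫ x in (0:ℝ)..L, (2*((ytt x t) * (starRingEnd ℂ) (yt x t)).re
          + 2*((ytx x t) * (starRingEnd ℂ) (yx x t)).re))
        = 2*(∫ x in (0:ℝ)..L, c x * (yt x t * (starRingEnd ℂ) (ut x t)).re) := by
      rw [intervalIntegral.integral_add (iyttyt.const_mul 2) (iytxyx.const_mul 2),
        intervalIntegral.integral_const_mul, intervalIntegral.integral_const_mul,
        hI2, hswap2]
      have e2 := intervalIntegral.integral_add iyxxyt iyxytx
      rw [hIBP2] at e2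
      rw [hswapc] at *
      have e3 : (∫ x in (0:ℝ)..L, (yxx x t * (starRingEnd ℂ) (yt x t)).re)
          = - ∫ x in (0:ℝ)..L, (yx x t * (starRingEnd ℂ) (ytx x t)).re := by linarith [e2]
      rw [e3]
      ring
    -- the delay term
    have hd3 : (∫ x in (0:ℝ)..β, ∫ ρ in (0:ℝ)..1,
          2*((ηxt x ρ t) * (starRingEnd ℂ) (ηx x ρ t)).re)
        = (1/τ) * ((∫ x in (0:ℝ)..β, ‖utx x t‖^2) - ∫ x in (0:ℝ)..β, ‖ηx x 1 t‖^2) := by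
      have e : (∫ x in (0:ℝ)..β, ∫ ρ in (0:ℝ)..1,
            2*((ηxt x ρ t) * (starRingEnd ℂ) (ηx x ρ t)).re)
          = ∫ x in (0:ℝ)..β, (1/τ) * (‖utx x t‖^2 - ‖ηx x 1 t‖^2) := by
        apply myintcongr hβ0
        intro x hx
        have hxL : x ∈ Set.Ioo (0:ℝ) L := ⟨hx.1, lt_trans hx.2 hβL⟩
        have hxI : x ∈ Set.Icc (0:ℝ) L := Set.Ioo_subset_Icc_self hxL
        have eρ : (∫ ρ in (0:ℝ)..1, 2*((ηxt x ρ t) * (starRingEnd ℂ) (ηx x ρ t)).re)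
            = ∫ ρ in (0:ℝ)..1, (-(1/τ)) * (2*((ηxρ x ρ t) * (starRingEnd ℂ) (ηx x ρ t)).re) := by
          apply myintcongr h01
          intro ρ hρ
          have h3 := hA3 ρ hρ x hxL
          have hτC : (τ:ℂ) ≠ 0 := Complex.ofReal_ne_zero.2 (ne_of_gt hτ)
          have hηxt_eq : ηxt x ρ t = -(1/(τ:ℂ)) * ηxρ x ρ t := by
            field_simp
            linear_combination h3
          rw [hηxt_eq]
          have hcast : (-(1/(τ:ℂ))) = ((-(1/τ) : ℝ) : ℂ) := by push_cast; ring
          rw [hcast, mul_assoc, Complex.re_ofReal_mul]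
          ring
        have ftc3 : (∫ ρ in (0:ℝ)..1, 2*((ηxρ x ρ t) * (starRingEnd ℂ) (ηx x ρ t)).re)
            = ‖ηx x 1 t‖^2 - ‖ηx x 0 t‖^2 := by
          apply intervalIntegral.integral_eq_sub_of_hasDerivAt
            (f := fun ρ => ‖ηx x ρ t‖^2)
          · intro ρ hρ
            rw [Set.uIcc_of_le h01] at hρ
            exact mynormsq (hηxρ x hxI t htI ρ hρ)
          · apply intIntC h01
            exact continuousOn_const.mul (contOn_mul_conj_re
              (sliceX (g := fun ρ s => ηxρ x ρ s) (slice3PT hηxρcont hxI) htI)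
              (sliceX (g := fun ρ s => ηx x ρ s) (slice3PT hηxcont hxI) htI))
        rw [eρ, intervalIntegral.integral_const_mul, ftc3, hA2 x hxL]
        ring
      rw [e, intervalIntegral.integral_const_mul, intervalIntegral.integral_sub iutxsqβ iηx1sqβ]
    have hRHS : (∫ x in (0:ℝ)..β, ‖ηx x 0 t‖^2) = ∫ x in (0:ℝ)..β, ‖utx x t‖^2 := by
      apply myintcongr hβ0
      intro x hx
      rw [hA2 x ⟨hx.1, lt_trans hx.2 hβL⟩]
    -- the Young inequality step
    have hkey : (∫ x in (0:ℝ)..β, (-κ₂) * (ηx x 1 t * (starRingEnd ℂ) (utx x t)).re)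
        ≤ ∫ x in (0:ℝ)..β, ((|κ₂|/2) * ‖utx x t‖^2 + (|κ₂|/2) * ‖ηx x 1 t‖^2) := by
      apply intervalIntegral.integral_mono_on hβ0 (iηx1utxβ.const_mul (-κ₂))
        ((iutxsqβ.const_mul _).add (iηx1sqβ.const_mul _))
      intro x hx
      have h1 := habs (ηx x 1 t) (utx x t)
      have h2 : -(κ₂ * (ηx x 1 t * (starRingEnd ℂ) (utx x t)).re)
          ≤ |κ₂| * |(ηx x 1 t * (starRingEnd ℂ) (utx x t)).re| := by
        rw [← abs_mul]
        exact neg_le_abs _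
      have h3 : |κ₂| * |(ηx x 1 t * (starRingEnd ℂ) (utx x t)).re|
          ≤ |κ₂| * (‖ηx x 1 t‖ * ‖utx x t‖) :=
        mul_le_mul_of_nonneg_left h1 (abs_nonneg κ₂)
      nlinarith [sq_nonneg (‖ηx x 1 t‖ - ‖utx x t‖), abs_nonneg κ₂]
    rw [intervalIntegral.integral_const_mul, intervalIntegral.integral_add
      (iutxsqβ.const_mul _) (iηx1sqβ.const_mul _), intervalIntegral.integral_const_mul,
      intervalIntegral.integral_const_mul] at hkey
    rw [hd1, hd2, hd3, hRHS]
    have heqτ : τ*|κ₂|/2 * ((1/τ) * ((∫ x in (0:ℝ)..β, ‖utx x t‖^2)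
          - ∫ x in (0:ℝ)..β, ‖ηx x 1 t‖^2))
        = |κ₂|/2 * (∫ x in (0:ℝ)..β, ‖utx x t‖^2)
          - |κ₂|/2 * (∫ x in (0:ℝ)..β, ‖ηx x 1 t‖^2) := by
      field_simp
    linarith [hkey, heqτ]
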